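/- Let G be a group, L a subgroup of G, d ≥ 1, and g : Fin d → G a complete transversal of the right cosets of L, i.e., the map L × Fin d → G, (l, k) ↦ l * g k, is a bijection. Then: (a) for every z ∈ MonoidAlgebra ℤ G and every k : Fin d there exist unique elements Λ(z) k j ∈ MonoidAlgebra ℤ L (for j : Fin d) such that (single (g k) 1) * z = Σ_j ι(Λ(z) k j) * (single (g j) 1), where ι : MonoidAlgebra ℤ L → MonoidAlgebra ℤ G is the ring embedding induced by the inclusion L ≤ G; (b) the resulting map Λ : MonoidAlgebra ℤ G → Matrix (Fin d) (Fin d) (MonoidAlgebra ℤ L) is a ring homomorphism, i.e., Λ(z₁ + z₂) = Λ(z₁) + Λ(z₂), Λ(z₁ * z₂) = Λ(z₁) * Λ(z₂), and Λ(1) = 1; (c) for every h ∈ G, each row and each column of Λ(single h 1) contains exactly one nonzero entry, and that entry equals single l 1 for some l ∈ L. -/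

import Mathlib

open scoped Classical

/-- The matrix representation `Λ` of right multiplication on the free
`(MonoidAlgebra ℤ L)`-module `MonoidAlgebra ℤ G` with basis a complete transversal
`g : Fin d → G` of the right cosets of `L`: existence, uniqueness, ring-homomorphism
properties, and the monomial (permutation-matrix) structure on group elements. -/
theorem restriction_matrix_representation {G : Type*} [Group G] (L : Subgroup G)
    (d : ℕ) (hd : 1 ≤ d) (g : Fin d → G)
    (hg : Function.Bijective fun p : L × Fin d => (p.1 : G) * g p.2) :
    ∃ Λ : MonoidAlgebra ℤ G → Matrix (Fin d) (Fin d) (MonoidAlgebra ℤ L),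
      -- (a) existence of the defining expansion
      (∀ (z : MonoidAlgebra ℤ G) (k : Fin d),
        MonoidAlgebra.single (g k) (1 : ℤ) * z =
          ∑ j : Fin d, (MonoidAlgebra.mapDomainRingHom ℤ L.subtype) (Λ z k j) *
            MonoidAlgebra.single (g j) (1 : ℤ)) ∧
      -- (a) uniqueness of the coefficients
      (∀ (z : MonoidAlgebra ℤ G) (k : Fin d) (c : Fin d → MonoidAlgebra ℤ L),
        (MonoidAlgebra.single (g k) (1 : ℤ) * z =
          ∑ j : Fin d, (MonoidAlgebra.mapDomainRingHom ℤ L.subtype) (c j) *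
            MonoidAlgebra.single (g j) (1 : ℤ)) → c = Λ z k) ∧
      -- (b) Λ is a ring homomorphism
      (∀ z₁ z₂ : MonoidAlgebra ℤ G, Λ (z₁ + z₂) = Λ z₁ + Λ z₂) ∧
      (∀ z₁ z₂ : MonoidAlgebra ℤ G, Λ (z₁ * z₂) = Λ z₁ * Λ z₂) ∧
      (Λ 1 = 1) ∧
      -- (c) rows and columns of Λ (single h 1) have exactly one nonzero entry
      (∀ (h : G) (k : Fin d), ∃! j : Fin d, Λ (MonoidAlgebra.single h (1 : ℤ)) k j ≠ 0) ∧
      (∀ (h : G) (j : Fin d), ∃! k : Fin d, Λ (MonoidAlgebra.single h (1 : ℤ)) k j ≠ 0) ∧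
      -- (c) and every nonzero entry is a group element of L
      (∀ (h : G) (k j : Fin d), Λ (MonoidAlgebra.single h (1 : ℤ)) k j ≠ 0 →
        ∃ l : L, Λ (MonoidAlgebra.single h (1 : ℤ)) k j = MonoidAlgebra.single l (1 : ℤ)) := by
  classical
  set e : L × Fin d ≃ G := Equiv.ofBijective _ hg with he
  have hdec : ∀ x : G, ((e.symm x).1 : G) * g (e.symm x).2 = x := by
    intro x
    conv_rhs => rw [← e.apply_symm_apply x]
    rfl
  have hsymm : ∀ (l : L) (j : Fin d), e.symm ((l : G) * g j) = (l, j) := fun l j =>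
    e.symm_apply_apply (l, j)
  -- the basic linear equivalence
  let T : MonoidAlgebra ℤ G ≃ₗ[ℤ] (Fin d →₀ MonoidAlgebra ℤ L) :=
    (MonoidAlgebra.coeffLinearEquiv ℤ).trans ((Finsupp.domLCongr e.symm).trans
      ((Finsupp.domLCongr (Equiv.prodComm L (Fin d))).trans
        ((Finsupp.finsuppProdLEquiv ℤ).trans
          (Finsupp.mapRange.linearEquiv (MonoidAlgebra.coeffLinearEquiv ℤ).symm))))
  have hTapply : ∀ (z : MonoidAlgebra ℤ G) (j : Fin d) (l : L),
      (T z j).coeff l = z.coeff ((l : G) * g j) := by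
    intro z j l
    rfl
  set ι : MonoidAlgebra ℤ L →+* MonoidAlgebra ℤ G :=
    MonoidAlgebra.mapDomainRingHom ℤ L.subtype with hι
  have hιapply : ∀ (y : MonoidAlgebra ℤ L) (l : L), (ι y).coeff ((l : G)) = y.coeff l := by
    intro y l
    exact Finsupp.mapDomain_apply Subtype.coe_injective y.coeff l
  have hιnot : ∀ (y : MonoidAlgebra ℤ L) (x : G), x ∉ L → (ι y).coeff x = 0 := by
    intro y x hx
    refine Finsupp.mapDomain_notin_range _ _ ?_
    rintro ⟨l, rfl⟩
    exact hx l.2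
  -- the weighted sum of transversal elements
  set S : (Fin d → MonoidAlgebra ℤ L) → MonoidAlgebra ℤ G :=
    fun c => ∑ j : Fin d, ι (c j) * MonoidAlgebra.single (g j) (1 : ℤ) with hS
  have hTS : ∀ (c : Fin d → MonoidAlgebra ℤ L) (j : Fin d), T (S c) j = c j := by
    intro c j
    ext l
    rw [hTapply]
    rw [hS]
    rw [MonoidAlgebra.coeff_sum, Finsupp.finset_sum_apply]
    rw [Finset.sum_eq_single j]
    · rw [MonoidAlgebra.coeff_mul_single_apply]
      rw [mul_inv_cancel_right]
      rw [hιapply, mul_one]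
    · intro j' _ hj'
      rw [MonoidAlgebra.coeff_mul_single_apply]
      rw [hιnot, zero_mul]
      intro hmem
      set l' : L := ⟨(l : G) * g j * (g j')⁻¹, hmem⟩ with hl'
      have : (l' : G) * g j' = (l : G) * g j := by
        simp [hl', inv_mul_cancel_right]
      have h2 := hsymm l' j'
      rw [this, hsymm] at h2
      exact hj' (congrArg Prod.snd h2).symm
    · intro hj
      exact absurd (Finset.mem_univ j) hj
  have hrec : ∀ z : MonoidAlgebra ℤ G, S (fun j => T z j) = z := by
    intro z
    apply T.injective
    ext j l
    rw [hTS]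
  -- definition of Λ
  set Λ : MonoidAlgebra ℤ G → Matrix (Fin d) (Fin d) (MonoidAlgebra ℤ L) :=
    fun z => Matrix.of fun k j => T (MonoidAlgebra.single (g k) (1 : ℤ) * z) j with hΛ
  have hex : ∀ (z : MonoidAlgebra ℤ G) (k : Fin d),
      MonoidAlgebra.single (g k) (1 : ℤ) * z = S (Λ z k) := by
    intro z k
    exact (hrec _).symm
  have huniq : ∀ (z : MonoidAlgebra ℤ G) (k : Fin d) (c : Fin d → MonoidAlgebra ℤ L),
      MonoidAlgebra.single (g k) (1 : ℤ) * z = S c → c = Λ z k := by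
    intro z k c hc
    funext j
    have : S c = S (Λ z k) := hc.symm.trans (hex z k)
    calc c j = T (S c) j := (hTS c j).symm
      _ = T (S (Λ z k)) j := by rw [this]
      _ = Λ z k j := hTS _ j
  -- the single-element formula
  have hΛh : ∀ (h : G) (k j : Fin d),
      Λ (MonoidAlgebra.single h (1 : ℤ)) k j =
        if (e.symm (g k * h)).2 = j then
          MonoidAlgebra.single (e.symm (g k * h)).1 (1 : ℤ) else 0 := by
    intro h k j
    have h1 : MonoidAlgebra.single (g k) (1 : ℤ) * MonoidAlgebra.single h (1 : ℤ) =
        MonoidAlgebra.single (g k * h) (1 : ℤ) := by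
      rw [MonoidAlgebra.single_mul_single, mul_one]
    show T (MonoidAlgebra.single (g k) (1 : ℤ) * MonoidAlgebra.single h (1 : ℤ)) j = _
    rw [h1]
    ext l
    rw [hTapply]
    by_cases hEq : g k * h = (l : G) * g j
    · have h2 : e.symm (g k * h) = (l, j) := by rw [hEq, hsymm]
      rw [h2]
      simp [hEq, MonoidAlgebra.coeff_single, Finsupp.single_apply]
    · have h3 : (MonoidAlgebra.single (g k * h) (1 : ℤ)).coeff ((l : G) * g j) = 0 := by
        rw [MonoidAlgebra.coeff_single, Finsupp.single_apply, if_neg hEq]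
      rw [h3]
      by_cases hj : (e.symm (g k * h)).2 = j
      · rw [if_pos hj]
        rw [MonoidAlgebra.coeff_single, Finsupp.single_apply, if_neg]
        intro hl
        apply hEq
        conv_lhs => rw [← hdec (g k * h)]
        rw [hj, hl]
      · rw [if_neg hj]
        rfl
  -- the permutation map
  have hφinj : ∀ h : G, Function.Injective (fun k : Fin d => (e.symm (g k * h)).2) := by
    intro h k₁ k₂ hkk
    simp only at hkk
    have h₁ := hdec (g k₁ * h)
    have h₂ := hdec (g k₂ * h)
    rw [hkk] at h₁
    set j := (e.symm (g k₂ * h)).2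
    set l₁ := (e.symm (g k₁ * h)).1
    set l₂ := (e.symm (g k₂ * h)).1
    have key : ((l₂ * l₁⁻¹ : L) : G) * g k₁ = ((1 : L) : G) * g k₂ := by
      have e₁ : g k₁ = (l₁ : G) * g j * h⁻¹ := by rw [h₁]; group
      have e₂ : g k₂ = (l₂ : G) * g j * h⁻¹ := by rw [h₂]; group
      push_cast
      rw [e₁, e₂]
      group
    have key' : (fun p : L × Fin d => (p.1 : G) * g p.2) (l₂ * l₁⁻¹, k₁) =
        (fun p : L × Fin d => (p.1 : G) * g p.2) (1, k₂) := key
    have := hg.1 key'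
    exact (Prod.ext_iff.mp this).2
  have hφsurj : ∀ h : G, Function.Surjective (fun k : Fin d => (e.symm (g k * h)).2) :=
    fun h => Finite.injective_iff_surjective.mp (hφinj h)
  have hne : ∀ (l : L), MonoidAlgebra.single l (1 : ℤ) ≠ 0 :=
    fun l h0 => one_ne_zero (MonoidAlgebra.single_eq_zero.mp h0)
  refine ⟨Λ, ?_, ?_, ?_, ?_, ?_, ?_, ?_, ?_⟩
  · -- existence
    intro z k
    exact hex z k
  · -- uniqueness
    intro z k c hc
    exact huniq z k c hc
  · -- additivity
    intro z₁ z₂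
    funext k j
    show T (MonoidAlgebra.single (g k) (1 : ℤ) * (z₁ + z₂)) j = _
    rw [mul_add, map_add, Finsupp.add_apply]
    rfl
  · -- multiplicativity
    intro z₁ z₂
    funext k i
    have key : MonoidAlgebra.single (g k) (1 : ℤ) * (z₁ * z₂) =
        S (fun i => ∑ j : Fin d, Λ z₁ k j * Λ z₂ j i) := by
      calc MonoidAlgebra.single (g k) (1 : ℤ) * (z₁ * z₂)
          = (MonoidAlgebra.single (g k) (1 : ℤ) * z₁) * z₂ := by rw [mul_assoc]
        _ = S (Λ z₁ k) * z₂ := by rw [hex]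
        _ = ∑ j : Fin d, ι (Λ z₁ k j) * (MonoidAlgebra.single (g j) (1 : ℤ) * z₂) := by
            rw [hS]
            rw [Finset.sum_mul]
            exact Finset.sum_congr rfl fun j _ => by rw [mul_assoc]
        _ = ∑ j : Fin d, ι (Λ z₁ k j) * S (Λ z₂ j) := by
            exact Finset.sum_congr rfl fun j _ => by rw [hex]
        _ = ∑ j : Fin d, ∑ i : Fin d,
              ι (Λ z₁ k j * Λ z₂ j i) * MonoidAlgebra.single (g i) (1 : ℤ) := by
            refine Finset.sum_congr rfl fun j _ => ?_
            rw [hS, Finset.mul_sum]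
            refine Finset.sum_congr rfl fun i _ => ?_
            rw [map_mul, mul_assoc]
        _ = ∑ i : Fin d, ∑ j : Fin d,
              ι (Λ z₁ k j * Λ z₂ j i) * MonoidAlgebra.single (g i) (1 : ℤ) :=
            Finset.sum_comm
        _ = S (fun i => ∑ j : Fin d, Λ z₁ k j * Λ z₂ j i) := by
            rw [hS]
            refine Finset.sum_congr rfl fun i _ => ?_
            rw [← Finset.sum_mul, ← map_sum]
    have := huniq (z₁ * z₂) k (fun i => ∑ j : Fin d, Λ z₁ k j * Λ z₂ j i) key
    rw [Matrix.mul_apply]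
    exact (congrFun this i).symm
  · -- unit
    funext k j
    have key : MonoidAlgebra.single (g k) (1 : ℤ) * 1 =
        S (fun j => if k = j then 1 else 0) := by
      rw [mul_one, hS]
      show MonoidAlgebra.single (g k) (1 : ℤ) =
        ∑ j : Fin d, ι (if k = j then 1 else 0) * MonoidAlgebra.single (g j) (1 : ℤ)
      rw [Finset.sum_eq_single k]
      · rw [if_pos rfl, map_one, one_mul]
      · intro j' _ hj'
        rw [if_neg (Ne.symm hj'), map_zero, zero_mul]
      · intro hk
        exact absurd (Finset.mem_univ k) hk
    have := huniq 1 k (fun j => if k = j then 1 else 0) key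
    rw [Matrix.one_apply]
    exact (congrFun this j).symm
  · -- rows
    intro h k
    refine ⟨(e.symm (g k * h)).2, ?_, ?_⟩
    · show Λ (MonoidAlgebra.single h 1) k (e.symm (g k * h)).2 ≠ 0
      rw [hΛh, if_pos rfl]
      exact hne _
    · intro j hj
      have hj : Λ (MonoidAlgebra.single h 1) k j ≠ 0 := hj
      rw [hΛh] at hj
      by_contra hne'
      rw [if_neg (fun hc => hne' hc.symm)] at hj
      exact hj rfl
  · -- columns
    intro h j
    obtain ⟨k, hk⟩ := hφsurj h j
    have hk' : (e.symm (g k * h)).2 = j := hk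
    refine ⟨k, ?_, ?_⟩
    · show Λ (MonoidAlgebra.single h 1) k j ≠ 0
      rw [hΛh, if_pos hk']
      exact hne _
    · intro k'' hk''
      have hk''' : Λ (MonoidAlgebra.single h 1) k'' j ≠ 0 := hk''
      rw [hΛh] at hk'''
      by_cases hc : (e.symm (g k'' * h)).2 = j
      · exact hφinj h (hc.trans hk'.symm)
      · rw [if_neg hc] at hk'''
        exact absurd rfl hk'''
  · -- entries are group elements
    intro h k j hnz
    rw [hΛh] at hnz ⊢
    by_cases hc : (e.symm (g k * h)).2 = j
    · exact ⟨(e.symm (g k * h)).1, by rw [if_pos hc]⟩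
    · rw [if_neg hc] at hnz
      exact absurd rfl hnz
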